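/- Let n ≥ 2 be an integer. In V = ℝ^{n+1}, with standard basis vectors denoted ε_1,…,ε_n,δ, let W be the group of signed permutations of the ε-coordinates (all maps sending each ε_i to ±ε_{σ(i)} for a permutation σ ∈ S_n) fixing δ, let ρ_0 := Σ_{i=1}^n (n−i+1)ε_i, let Π := {ε_1−ε_2, ε_2−ε_3, …, ε_{n−1}−ε_n, ε_n−δ, ε_n+δ}, and let Q^+ be the set of linear combinations of elements of Π with nonnegative integer coefficients. If λ ∈ V has trivial stabilizer in W and the whole orbit Wλ is contained in ρ_0 − Q^+, then λ ∈ Wρ_0. -/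

import Mathlib

/-- The action of a signed permutation `(σ,η)` (`σ ∈ S_n`, `η ∈ {±1}^n`) on
`ℝ^{n+1} = span(ε_1,…,ε_n,δ)`, sending `ε_i ↦ η_i ε_{σ(i)}` and fixing
`δ`. -/
noncomputable def cAct (n : ℕ) (σ : Equiv.Perm (Fin n)) (η : Fin n → ℤˣ)
    (f : Fin n ⊕ Unit → ℝ) : Fin n ⊕ Unit → ℝ :=
  Sum.elim (fun j => ((η (σ.symm j) : ℤ) : ℝ) * f (Sum.inl (σ.symm j)))
    (fun u => f (Sum.inr u))

/-- `ρ₀ = Σ_{i=1}^n (n−i+1)ε_i` for `C(n)` (`1`-indexed; coordinates here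
are `0`-indexed). -/
noncomputable def cRho (n : ℕ) : Fin n ⊕ Unit → ℝ :=
  Sum.elim (fun i => (n : ℝ) - (i : ℕ)) (fun _ => 0)

/-- The simple roots `Π = {ε_1−ε_2, …, ε_{n−1}−ε_n, ε_n−δ, ε_n+δ}` of `C(n)`
(written `0`-indexed). -/
noncomputable def cSimple (n : ℕ) : Set (Fin n ⊕ Unit → ℝ) :=
  {v | (∃ i : Fin n, ∃ hi : (i : ℕ) + 1 < n,
          v = Pi.single (Sum.inl i) 1 - Pi.single (Sum.inl ⟨(i : ℕ) + 1, hi⟩) 1) ∨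
       (∃ hn : 0 < n,
          v = Pi.single (Sum.inl ⟨n - 1, by omega⟩) 1 - Pi.single (Sum.inr ()) 1) ∨
       (∃ hn : 0 < n,
          v = Pi.single (Sum.inl ⟨n - 1, by omega⟩) 1 + Pi.single (Sum.inr ()) 1)}

/-- Every element of `Q⁺` has: total ε-sum at least `|δ|`-coordinate (two
one-sided inequalities), and all coordinates integral. -/
lemma cQ_props {n : ℕ} {q : Fin n ⊕ Unit → ℝ}
    (hq : q ∈ AddSubmonoid.closure (cSimple n)) :
    (0 ≤ (∑ j, q (Sum.inl j)) - q (Sum.inr ())) ∧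
    (0 ≤ (∑ j, q (Sum.inl j)) + q (Sum.inr ())) ∧
    (∀ x, ∃ m : ℤ, q x = (m : ℝ)) := by
  induction hq using AddSubmonoid.closure_induction with
  | mem v hv =>
    rcases hv with ⟨i, hi, rfl⟩ | ⟨hn, rfl⟩ | ⟨hn, rfl⟩ <;>
      refine ⟨?_, ?_, fun x => ?_⟩
    · simp [Pi.single_apply, Finset.sum_sub_distrib, Sum.inl.injEq]
    · simp [Pi.single_apply, Finset.sum_sub_distrib, Sum.inl.injEq]
    · simp only [Pi.sub_apply, Pi.single_apply]
      split_ifs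
      exacts [⟨0, by norm_num⟩, ⟨1, by norm_num⟩, ⟨-1, by norm_num⟩, ⟨0, by norm_num⟩]
    · simp [Pi.single_apply, Finset.sum_sub_distrib, Sum.inl.injEq]
    · simp [Pi.single_apply, Finset.sum_sub_distrib, Sum.inl.injEq]
    · simp only [Pi.sub_apply, Pi.single_apply]
      split_ifs
      exacts [⟨0, by norm_num⟩, ⟨1, by norm_num⟩, ⟨-1, by norm_num⟩, ⟨0, by norm_num⟩]
    · simp [Pi.single_apply, Finset.sum_add_distrib, Sum.inl.injEq]
    · simp [Pi.single_apply, Finset.sum_add_distrib, Sum.inl.injEq]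
    · simp only [Pi.add_apply, Pi.single_apply]
      split_ifs
      exacts [⟨2, by norm_num⟩, ⟨1, by norm_num⟩, ⟨1, by norm_num⟩, ⟨0, by norm_num⟩]
  | zero => exact ⟨by simp, by simp, fun x => ⟨0, by simp⟩⟩
  | add a b _ _ ha hb =>
    obtain ⟨h1, h2, h3⟩ := ha
    obtain ⟨h1', h2', h3'⟩ := hb
    refine ⟨?_, ?_, fun x => ?_⟩
    · simp only [Pi.add_apply, Finset.sum_add_distrib]; linarith
    · simp only [Pi.add_apply, Finset.sum_add_distrib]; linarith
    · obtain ⟨m, hm⟩ := h3 x; obtain ⟨m', hm'⟩ := h3' x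
      exact ⟨m + m', by simp [hm, hm']⟩

/-- A finset of positive naturals of cardinality `k` has sum at least
`1 + 2 + ⋯ + k`. -/
lemma cn_sum_lower (s : Finset ℕ) (hs : ∀ x ∈ s, 1 ≤ x) :
    ∑ i ∈ Finset.range s.card, (i + 1) ≤ ∑ x ∈ s, x := by
  induction s using Finset.strongInduction with
  | _ s ih =>
    rcases s.eq_empty_or_nonempty with rfl | hne
    · simp
    · have hmax := s.max'_mem hne
      have hsub : s ⊆ Finset.Icc 1 (s.max' hne) := fun x hx =>
        Finset.mem_Icc.mpr ⟨hs x hx, Finset.le_max' s x hx⟩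
      have hcard : s.card ≤ s.max' hne := by
        have := Finset.card_le_card hsub
        simpa using this
      have herase := ih (s.erase (s.max' hne)) (Finset.erase_ssubset hmax)
        (fun x hx => hs x (Finset.mem_of_mem_erase hx))
      have hc : (s.erase (s.max' hne)).card = s.card - 1 :=
        Finset.card_erase_of_mem hmax
      have hsum : ∑ x ∈ s, x = s.max' hne + ∑ x ∈ s.erase (s.max' hne), x :=
        (Finset.add_sum_erase s id hmax).symm
      obtain ⟨k, hk⟩ : ∃ k, s.card = k + 1 :=
        ⟨s.card - 1, by have := Finset.card_pos.mpr hne; omega⟩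
      rw [hk, Finset.sum_range_succ, hsum]
      rw [hc, hk] at herase
      simp only [Nat.add_sub_cancel] at herase
      omega

/-- For the Lie superalgebra `C(n)`, the orbit `Wρ₀` is the only regular
`W`-orbit lying entirely in `ρ₀ − Q⁺`. -/
theorem Cn_regular_orbit (n : ℕ) (hn : 2 ≤ n)
    (lam : Fin n ⊕ Unit → ℝ)
    (hstab : ∀ (σ : Equiv.Perm (Fin n)) (η : Fin n → ℤˣ),
      cAct n σ η lam = lam → σ = 1 ∧ η = fun _ => 1)
    (horb : ∀ (σ : Equiv.Perm (Fin n)) (η : Fin n → ℤˣ),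
      cRho n - cAct n σ η lam ∈ AddSubmonoid.closure (cSimple n)) :
    ∃ (σ : Equiv.Perm (Fin n)) (η : Fin n → ℤˣ),
      lam = cAct n σ η (cRho n) := by
  classical
  -- Step 1: all coordinates of `lam` are integers.
  have hact1 : cAct n 1 (fun _ => 1) lam = lam := by
    funext x
    cases x with
    | inl k =>
      have hs1 : (1 : Equiv.Perm (Fin n)).symm k = k := rfl
      simp [cAct, hs1]
    | inr u => simp [cAct]
  have hint := (cQ_props (horb 1 (fun _ => 1))).2.2
  rw [hact1] at hint
  have ha : ∀ j : Fin n, ∃ m : ℤ, lam (Sum.inl j) = m := by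
    intro j
    obtain ⟨m, hm⟩ := hint (Sum.inl j)
    refine ⟨(n : ℤ) - (j : ℕ) - m, ?_⟩
    have h2 : ((n : ℝ) - (j : ℕ)) - lam (Sum.inl j) = m := by
      simpa [cRho, Pi.sub_apply] using hm
    push_cast
    linarith
  choose a haa using ha
  -- Step 2: regularity gives nonzero coordinates with distinct absolute values.
  have hnz : ∀ j, lam (Sum.inl j) ≠ 0 := by
    intro j hj
    have hact : cAct n 1 (fun k => if k = j then -1 else 1) lam = lam := by
      funext x
      cases x with
      | inl k =>
        have hs1 : (1 : Equiv.Perm (Fin n)).symm k = k := rfl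
        simp only [cAct, Sum.elim_inl, hs1]
        by_cases hk : k = j
        · subst hk; simp [hj]
        · simp [hk]
      | inr u => simp [cAct]
    have h2 := (hstab _ _ hact).2
    have h3 := congrFun h2 j
    simp only [if_pos rfl] at h3
    exact absurd (Units.ext_iff.mp h3) (by norm_num)
  have hdist : ∀ i j : Fin n, i ≠ j → lam (Sum.inl i) ≠ lam (Sum.inl j) ∧
      lam (Sum.inl i) ≠ -lam (Sum.inl j) := by
    intro i j hij
    constructor
    · intro heq
      have hact : cAct n (Equiv.swap i j) (fun _ => 1) lam = lam := by
        funext x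
        cases x with
        | inl k =>
          simp only [cAct, Sum.elim_inl, Equiv.symm_swap, Units.val_one,
            Int.cast_one, one_mul]
          rcases eq_or_ne k i with rfl | hki
          · rw [Equiv.swap_apply_left, ← heq]
          · rcases eq_or_ne k j with rfl | hkj
            · rw [Equiv.swap_apply_right, heq]
            · rw [Equiv.swap_apply_of_ne_of_ne hki hkj]
        | inr u => simp [cAct]
      have h1 := (hstab _ _ hact).1
      have hswap := Equiv.swap_apply_left i j
      rw [h1] at hswap
      simp at hswap
      exact hij hswap
    · intro heq
      have hact : cAct n (Equiv.swap i j)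
          (fun k => if k = i ∨ k = j then -1 else 1) lam = lam := by
        funext x
        cases x with
        | inl k =>
          simp only [cAct, Sum.elim_inl, Equiv.symm_swap]
          rcases eq_or_ne k i with rfl | hki
          · simp [Equiv.swap_apply_left]
            linarith [heq]
          · rcases eq_or_ne k j with rfl | hkj
            · simp [Equiv.swap_apply_right]
              linarith [heq]
            · simp only [Equiv.swap_apply_of_ne_of_ne hki hkj]
              simp [hki, hkj]
        | inr u => simp [cAct]
      have h2 := (hstab _ _ hact).2
      have h3 := congrFun h2 i
      simp only [if_pos (Or.inl rfl)] at h3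
      exact absurd (Units.ext_iff.mp h3) (by norm_num)
  -- Step 3: the natural numbers `f j = |a j|`.
  set f : Fin n → ℕ := fun j => (a j).natAbs with hf
  have hf1 : ∀ j, 1 ≤ f j := by
    intro j
    have hz : a j ≠ 0 := by
      intro h
      exact hnz j (by rw [haa j, h]; simp)
    simp only [hf]
    omega
  have hfinj : Function.Injective f := by
    intro i j hijf
    by_contra hij
    simp only [hf] at hijf
    rcases Int.natAbs_eq_natAbs_iff.mp hijf with h | h
    · exact (hdist i j hij).1 (by rw [haa i, haa j, h])
    · exact (hdist i j hij).2 (by rw [haa i, haa j, h]; push_cast; ring)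
  have habs : ∀ j, ((f j : ℕ) : ℝ) = |lam (Sum.inl j)| := by
    intro j
    rw [haa j, hf, ← Int.cast_abs]
    show (((a j).natAbs : ℕ) : ℝ) = ((|a j| : ℤ) : ℝ)
    rw [Int.abs_eq_natAbs, Int.cast_natCast]
  -- Step 4: sum bounds from `horb`.
  have hcomp : ∀ j, cAct n 1 (fun k => if 0 ≤ lam (Sum.inl k) then 1 else -1)
      lam (Sum.inl j) = |lam (Sum.inl j)| := by
    intro j
    have hs1 : (1 : Equiv.Perm (Fin n)).symm j = j := rfl
    simp only [cAct, Sum.elim_inl, hs1]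
    split_ifs with h
    · simp [abs_of_nonneg h]
    · simp [abs_of_neg (lt_of_not_ge h)]
  obtain ⟨hq1, hq2, -⟩ :=
    cQ_props (horb 1 (fun k => if 0 ≤ lam (Sum.inl k) then 1 else -1))
  have hsum1 : (∑ j, (cRho n -
        cAct n 1 (fun k => if 0 ≤ lam (Sum.inl k) then 1 else -1) lam) (Sum.inl j)) =
      (∑ j : Fin n, ((n : ℝ) - (j : ℕ))) - ∑ j, |lam (Sum.inl j)| := by
    rw [← Finset.sum_sub_distrib]
    refine Finset.sum_congr rfl fun j _ => ?_
    rw [Pi.sub_apply, hcomp j]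
    rfl
  have hinr : (cRho n -
        cAct n 1 (fun k => if 0 ≤ lam (Sum.inl k) then 1 else -1) lam) (Sum.inr ()) =
      -lam (Sum.inr ()) := by
    simp [cAct, cRho]
  rw [hsum1, hinr] at hq1 hq2
  -- Step 5: convert to naturals.
  have hS : (∑ j, |lam (Sum.inl j)|) = ((∑ j, f j : ℕ) : ℝ) := by
    push_cast
    exact Finset.sum_congr rfl fun j _ => (habs j).symm
  have hR : (∑ j : Fin n, ((n : ℝ) - (j : ℕ))) =
      ((∑ i ∈ Finset.range n, (i + 1) : ℕ) : ℝ) := by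
    rw [Fin.sum_univ_eq_sum_range (fun i => (n : ℝ) - (i : ℕ)) n,
      ← Finset.sum_range_reflect]
    push_cast
    refine Finset.sum_congr rfl fun i hi => ?_
    have hin : i < n := Finset.mem_range.mp hi
    have h1 : ((n - 1 - i : ℕ) : ℝ) = (n : ℝ) - 1 - i := by
      have h2 : n - 1 - i = n - (1 + i) := by omega
      rw [h2, Nat.cast_sub (by omega)]
      push_cast; ring
    rw [h1]; ring
  have hle : (∑ j, f j) ≤ ∑ i ∈ Finset.range n, (i + 1) := by
    have hcast : ((∑ j, f j : ℕ) : ℝ) ≤ ((∑ i ∈ Finset.range n, (i + 1) : ℕ) : ℝ) := by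
      rw [← hS, ← hR]; linarith
    exact_mod_cast hcast
  -- Step 6: lower bound via distinct positive integers.
  have hcard : (Finset.image f Finset.univ).card = n := by
    rw [Finset.card_image_of_injective _ hfinj, Finset.card_univ, Fintype.card_fin]
  have hsge : ∀ x ∈ Finset.image f Finset.univ, 1 ≤ x := by
    intro x hx
    obtain ⟨j, -, rfl⟩ := Finset.mem_image.mp hx
    exact hf1 j
  have hsum_s : ∑ x ∈ Finset.image f Finset.univ, x = ∑ j, f j :=
    Finset.sum_image (fun i _ j _ h => hfinj h)
  have hge := cn_sum_lower _ hsge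
  rw [hcard, hsum_s] at hge
  have heqsum : (∑ j, f j) = ∑ i ∈ Finset.range n, (i + 1) := le_antisymm hle hge
  -- Step 7: δ-coordinate vanishes.
  have hRS : (∑ j : Fin n, ((n : ℝ) - (j : ℕ))) = ∑ j, |lam (Sum.inl j)| := by
    rw [hS, hR, heqsum]
  have hδ : lam (Sum.inr ()) = 0 := by linarith
  -- Step 8: all values are at most n.
  have hfle : ∀ j, f j ≤ n := by
    intro j₀
    by_contra hcon
    push_neg at hcon
    have hmem : f j₀ ∈ Finset.image f Finset.univ :=
      Finset.mem_image_of_mem f (Finset.mem_univ j₀)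
    have herase := cn_sum_lower ((Finset.image f Finset.univ).erase (f j₀))
      (fun x hx => hsge x (Finset.mem_of_mem_erase hx))
    have hcc : ((Finset.image f Finset.univ).erase (f j₀)).card = n - 1 := by
      rw [Finset.card_erase_of_mem hmem, hcard]
    rw [hcc] at herase
    have hsplit : ∑ x ∈ Finset.image f Finset.univ, x =
        f j₀ + ∑ x ∈ (Finset.image f Finset.univ).erase (f j₀), x :=
      (Finset.add_sum_erase _ id hmem).symm
    rw [hsum_s] at hsplit
    have hlast : (∑ i ∈ Finset.range n, (i + 1)) =
        (∑ i ∈ Finset.range (n - 1), (i + 1)) + n := by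
      conv_lhs => rw [show n = (n - 1) + 1 by omega]
      rw [Finset.sum_range_succ]
      omega
    omega
  -- Step 9: build the permutation and signs.
  have hτbij : Function.Bijective
      (fun j : Fin n => (⟨n - f j, by have := hf1 j; omega⟩ : Fin n)) := by
    rw [Fintype.bijective_iff_injective_and_card]
    refine ⟨fun i j hijk => ?_, rfl⟩
    have h1 := hf1 i; have h2 := hf1 j
    have h3 := hfle i; have h4 := hfle j
    have h5 : n - f i = n - f j := congrArg Fin.val hijk
    exact hfinj (by omega)
  set τe : Equiv.Perm (Fin n) := Equiv.ofBijective _ hτbij with hτe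
  refine ⟨τe.symm, fun k => if 0 ≤ lam (Sum.inl (τe.symm k)) then 1 else -1, ?_⟩
  funext x
  cases x with
  | inr u =>
    cases u
    simpa [cAct, cRho] using hδ
  | inl j =>
    have hss : (τe.symm).symm = τe := Equiv.symm_symm τe
    simp only [cAct, Sum.elim_inl, hss, Equiv.symm_apply_apply]
    have hrho : cRho n (Sum.inl (τe j)) = (f j : ℝ) := by
      show (n : ℝ) - ((τe j : Fin n) : ℕ) = (f j : ℝ)
      have hτj : ((τe j : Fin n) : ℕ) = n - f j := rfl
      rw [hτj, Nat.cast_sub (hfle j)]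
      ring
    rw [hrho, habs j]
    split_ifs with h
    · simp [abs_of_nonneg h]
    · simp [abs_of_neg (lt_of_not_ge h)]
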